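/- Let J : Cl(r,s) → End(U) be an admissible representation (so J_zᵀ = -J_z with respect to an admissible scalar product on U) and φ = x₁⋯x_n ∈ Pin(r,s). Then for every z ∈ ℝ^{r,s}: J applied to Ad~_{φ⁻¹}(z) equals ((-1)^n / N(φ)) · J_φᵀ ∘ J_z ∘ J_φ, where J_φᵀ is the adjoint of J_φ with respect to the admissible scalar product. Equivalently, J_φᵀ J_z J_φ = J_{(-1)^n N(φ) Ad~_φᵀ(z)}. -/
import Mathlib


noncomputable section

/-- The standard bilinear form of signature `(r,s)` on `ℝ^{r+s}` (the polarization of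
`Q_{r,s}`). -/
def Brs (r s : ℕ) (x y : Fin (r + s) → ℝ) : ℝ :=
  ∑ i : Fin (r + s), (if (i : ℕ) < r then (1 : ℝ) else -1) * x i * y i

/-- The quadratic form generating the Clifford algebra `Cl_{r,s}` with the paper's convention
`z ⊗ z + ⟨z,z⟩_{r,s} = 0`, i.e. `ι z * ι z = -⟨z,z⟩_{r,s} • 1`. -/
def Qrs (r s : ℕ) : QuadraticForm ℝ (Fin (r + s) → ℝ) :=
  QuadraticMap.weightedSumSquares ℝ (fun i : Fin (r + s) => if (i : ℕ) < r then (-1 : ℝ) else 1)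

/-- Key adjoint computation by induction on the list of vectors. -/
theorem key_adjoint (r s : ℕ) (U : Type*) [AddCommGroup U] [Module ℝ U]
    (BU : U →ₗ[ℝ] U →ₗ[ℝ] ℝ)
    (ρ : CliffordAlgebra (Qrs r s) →ₐ[ℝ] Module.End ℝ U)
    (hadm : ∀ z x y, BU (ρ (CliffordAlgebra.ι (Qrs r s) z) x) y
      + BU x (ρ (CliffordAlgebra.ι (Qrs r s) z) y) = 0) :
    ∀ (l : List (Fin (r + s) → ℝ)) (x y : U),
      BU (ρ ((l.map (CliffordAlgebra.ι (Qrs r s))).prod) x) y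
        = ((-1 : ℝ) ^ l.length) *
          BU x (ρ ((l.map (CliffordAlgebra.ι (Qrs r s))).reverse.prod) y) := by
  intro l
  induction l with
  | nil => intro x y; simp
  | cons v t ih =>
    intro x y
    have h1 : BU (ρ (CliffordAlgebra.ι (Qrs r s) v)
        (ρ ((t.map (CliffordAlgebra.ι (Qrs r s))).prod) x)) y
        = - BU (ρ ((t.map (CliffordAlgebra.ι (Qrs r s))).prod) x)
            (ρ (CliffordAlgebra.ι (Qrs r s) v) y) := by
      have := hadm v (ρ ((t.map (CliffordAlgebra.ι (Qrs r s))).prod) x) y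
      linarith
    have h2 := ih x (ρ (CliffordAlgebra.ι (Qrs r s) v) y)
    simp only [List.map_cons, List.prod_cons, List.reverse_cons, List.prod_append,
      List.prod_cons, List.prod_nil, mul_one, List.length_cons, map_mul,
      Module.End.mul_apply] at *
    rw [h1, h2, pow_succ]
    ring

/-- For an admissible representation `J` and `φ = x₁⋯x_n ∈ Pin(r,s)`:
`J_{Ad~_{φ⁻¹}(z)} = ((-1)ⁿ / N(φ)) · J_φᵀ ∘ J_z ∘ J_φ`, where `J_φᵀ` is the adjoint of
`J_φ` with respect to the admissible scalar product. -/
theorem stmt6 (r s : ℕ) (U : Type*) [AddCommGroup U] [Module ℝ U]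
    (BU : U →ₗ[ℝ] U →ₗ[ℝ] ℝ)
    (hsymm : ∀ x y, BU x y = BU y x)
    (hnd : ∀ x, (∀ y, BU x y = 0) → x = 0)
    (ρ : CliffordAlgebra (Qrs r s) →ₐ[ℝ] Module.End ℝ U)
    (hadm : ∀ z x y, BU (ρ (CliffordAlgebra.ι (Qrs r s) z) x) y
      + BU x (ρ (CliffordAlgebra.ι (Qrs r s) z) y) = 0)
    (u : (CliffordAlgebra (Qrs r s))ˣ) (l : List (Fin (r + s) → ℝ))
    (hl : ∀ v ∈ l, Brs r s v v = 1 ∨ Brs r s v v = -1)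
    (hu : (u : CliffordAlgebra (Qrs r s)) = (l.map (CliffordAlgebra.ι (Qrs r s))).prod)
    (Nφ : ℝ)
    (hN : (u : CliffordAlgebra (Qrs r s)) *
        CliffordAlgebra.involute (CliffordAlgebra.reverse (u : CliffordAlgebra (Qrs r s))) =
      algebraMap ℝ (CliffordAlgebra (Qrs r s)) Nφ)
    (A' : Module.End ℝ U)
    (hA' : ∀ x y, BU (ρ (u : CliffordAlgebra (Qrs r s)) x) y = BU x (A' y)) :
    ∀ z : Fin (r + s) → ℝ,
      ρ (CliffordAlgebra.involute (↑u⁻¹ : CliffordAlgebra (Qrs r s)) *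
          CliffordAlgebra.ι (Qrs r s) z * (u : CliffordAlgebra (Qrs r s))) =
        ((-1 : ℝ) ^ l.length / Nφ) •
          (A' * ρ (CliffordAlgebra.ι (Qrs r s) z) * ρ (u : CliffordAlgebra (Qrs r s))) := by
  intro z
  have hNφ : Nφ ≠ 0 := by
    intro h0
    rw [h0, map_zero] at hN
    have h1 : CliffordAlgebra.involute (CliffordAlgebra.reverse (u : CliffordAlgebra (Qrs r s))) = 0 := by
      have h := congrArg (fun a => (↑u⁻¹ : CliffordAlgebra (Qrs r s)) * a) hN
      simpa [← mul_assoc] using h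
    have h2 : (u : CliffordAlgebra (Qrs r s)) = 0 := by
      have h := congrArg (fun a => CliffordAlgebra.reverse (CliffordAlgebra.involute a)) h1
      simpa using h
    exact u.ne_zero h2
  have hinv : (↑u⁻¹ : CliffordAlgebra (Qrs r s))
      = Nφ⁻¹ • CliffordAlgebra.involute (CliffordAlgebra.reverse (u : CliffordAlgebra (Qrs r s))) := by
    apply u.inv_eq_of_mul_eq_one_right
    rw [mul_smul_comm, hN, Algebra.algebraMap_eq_smul_one, smul_smul,
      inv_mul_cancel₀ hNφ, one_smul]
  have hinvol : CliffordAlgebra.involute (↑u⁻¹ : CliffordAlgebra (Qrs r s))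
      = Nφ⁻¹ • CliffordAlgebra.reverse (u : CliffordAlgebra (Qrs r s)) := by
    rw [hinv, map_smul]
    congr 1
    exact CliffordAlgebra.involute_involute _
  have hrev : CliffordAlgebra.reverse (u : CliffordAlgebra (Qrs r s))
      = (l.map (CliffordAlgebra.ι (Qrs r s))).reverse.prod := by
    rw [hu]; exact CliffordAlgebra.reverse_prod_map_ι l
  have hA'eq : A' = ((-1 : ℝ) ^ l.length) •
      ρ (CliffordAlgebra.reverse (u : CliffordAlgebra (Qrs r s))) := by
    ext y
    rw [← sub_eq_zero]
    apply hnd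
    intro x
    have h1 : BU x (A' y) = BU (ρ (u : CliffordAlgebra (Qrs r s)) x) y := (hA' x y).symm
    have h2 := key_adjoint r s U BU ρ hadm l x y
    rw [← hu, ← hrev] at h2
    rw [hsymm _ x, map_sub, h1, h2]
    simp only [LinearMap.smul_apply, map_smul, smul_eq_mul]
    ring
  rw [hinvol, smul_mul_assoc, smul_mul_assoc, map_smul, hA'eq, map_mul, map_mul]
  ext v
  simp only [LinearMap.smul_apply, Module.End.mul_apply, LinearMap.map_smul]
  rw [smul_smul]
  congr 1
  rw [div_mul_eq_mul_div, ← mul_pow]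
  norm_num
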